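/- Let L = ⋃_{k=0}^{m−1} (x_k + Γ) be a point packing generated by a lattice Γ ⊆ ℝ^d, R a similarity isometry of Γ, and β > 0 such that Γ ∩ βRΓ has finite index in βRΓ. If for every k ∈ {0,…,m−1} there exist n = [βRΓ : (Γ ∩ βRΓ)] distinct indices j_1,…,j_n with βRx_k − x_{j_i} ∈ Γ + βRΓ for all i, then βRL ⊆ L. -/

import Mathlib

/-- Theorem 3.2 (converse direction): if R ∈ OS(Γ), Γ ∩ βRΓ has finite index in βRΓ,
and every shift vector x_k admits n = [βRΓ : (Γ ∩ βRΓ)] distinct indices j with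
βRx_k − x_j ∈ Γ + βRΓ, then βRL ⊆ L. -/
theorem stmt7 (d m : ℕ) (hm : 0 < m)
    (Γ : Submodule ℤ (EuclideanSpace ℝ (Fin d)))
    [DiscreteTopology Γ] [IsZLattice ℝ Γ]
    (x : Fin m → EuclideanSpace ℝ (Fin d))
    (h0 : x ⟨0, hm⟩ = 0)
    (hdist : ∀ k1 k2 : Fin m, k1 ≠ k2 → x k1 - x k2 ∉ Γ)
    (L : Set (EuclideanSpace ℝ (Fin d)))
    (hL : L = ⋃ k : Fin m, (fun γ => x k + γ) '' (Γ : Set (EuclideanSpace ℝ (Fin d))))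
    (R : EuclideanSpace ℝ (Fin d) ≃ₗᵢ[ℝ] EuclideanSpace ℝ (Fin d))
    (hR : ∃ β' > (0 : ℝ), ∀ γ ∈ Γ, β' • R γ ∈ Γ)
    (β : ℝ) (hβ : 0 < β)
    (n : ℕ)
    (hn : n = Γ.toAddSubgroup.relIndex
      (Γ.map ((β • (R.toLinearEquiv.toLinearMap :
        EuclideanSpace ℝ (Fin d) →ₗ[ℝ] EuclideanSpace ℝ (Fin d))).restrictScalars
        ℤ)).toAddSubgroup)
    (hfin : n ≠ 0)
    (hcond : ∀ k : Fin m, ∃ J : Finset (Fin m), J.card = n ∧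
      ∀ j ∈ J, ∃ γ ∈ Γ, ∃ γ' ∈ Γ, β • R (x k) - x j = γ + β • R γ') :
    (fun v => β • R v) '' L ⊆ L := by
  set T : EuclideanSpace ℝ (Fin d) →ₗ[ℤ] EuclideanSpace ℝ (Fin d) :=
    ((β • (R.toLinearEquiv.toLinearMap :
      EuclideanSpace ℝ (Fin d) →ₗ[ℝ] EuclideanSpace ℝ (Fin d))).restrictScalars ℤ) with hT
  have hTapp : ∀ v, T v = β • R v := fun v => rfl
  set H : AddSubgroup (EuclideanSpace ℝ (Fin d)) := (Γ.map T).toAddSubgroup with hH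
  set K : AddSubgroup H := Γ.toAddSubgroup.addSubgroupOf H with hK
  have hKindex : K.index = n := by
    rw [hn]; rfl
  have hfinQ : Finite (H ⧸ K) := by
    refine Nat.finite_of_card_ne_zero ?_
    show K.index ≠ 0
    rw [hKindex]; exact hfin
  have : Fintype (H ⧸ K) := Fintype.ofFinite _
  have hcardQ : Fintype.card (H ⧸ K) = n := by
    rw [← hKindex, AddSubgroup.index, Nat.card_eq_fintype_card]
  rintro v ⟨u, hu, rfl⟩
  rw [hL] at hu ⊢
  rw [Set.mem_iUnion] at hu
  obtain ⟨k, γ, hγ, rfl⟩ := hu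
  obtain ⟨J, hJcard, hJ⟩ := hcond k
  choose γf hγf γ'f hγ'f heq using hJ
  have hmemH : ∀ j (hj : j ∈ J), β • R (γ'f j hj) ∈ H := by
    intro j hj
    exact ⟨γ'f j hj, hγ'f j hj, rfl⟩
  set g : {j // j ∈ J} → H ⧸ K :=
    fun j => QuotientAddGroup.mk ⟨β • R (γ'f j.1 j.2), hmemH j.1 j.2⟩ with hg
  have hginj : Function.Injective g := by
    rintro ⟨j, hj⟩ ⟨j', hj'⟩ hgg
    simp only [hg] at hgg
    rw [QuotientAddGroup.eq] at hgg
    have hdiff : -(β • R (γ'f j hj)) + β • R (γ'f j' hj') ∈ Γ := hgg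
    by_contra hne
    have hne' : j' ≠ j := fun h => hne (Subtype.ext h.symm)
    apply hdist j' j hne'
    have e1 := heq j hj
    have e2 := heq j' hj'
    have : x j' - x j = (γf j hj - γf j' hj') -
        (-(β • R (γ'f j hj)) + β • R (γ'f j' hj')) := by
      have : β • R (x k) - x j - (β • R (x k) - x j') =
          (γf j hj + β • R (γ'f j hj)) - (γf j' hj' + β • R (γ'f j' hj')) := by
        rw [← e1, ← e2]
      linear_combination (norm := abel) this
    rw [this]
    exact Γ.sub_mem (Γ.sub_mem (hγf j hj) (hγf j' hj')) hdiff
  have hsurj : Function.Surjective g := by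
    have hcard : Fintype.card {j // j ∈ J} = Fintype.card (H ⧸ K) := by
      rw [Fintype.card_coe, hJcard, hcardQ]
    exact ((Fintype.bijective_iff_injective_and_card g).2 ⟨hginj, hcard⟩).2
  have hwH : -(β • R γ) ∈ H := by
    exact neg_mem (⟨γ, hγ, rfl⟩ : β • R γ ∈ H)
  obtain ⟨⟨j, hj⟩, hjq⟩ := hsurj (QuotientAddGroup.mk ⟨-(β • R γ), hwH⟩)
  simp only [hg] at hjq
  rw [QuotientAddGroup.eq] at hjq
  have hjq' : -(β • R (γ'f j hj)) + -(β • R γ) ∈ Γ := hjq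
  rw [Set.mem_iUnion]
  refine ⟨j, γf j hj + (β • R (γ'f j hj) + β • R γ), ?_, ?_⟩
  · have : β • R (γ'f j hj) + β • R γ = -(-(β • R (γ'f j hj)) + -(β • R γ)) := by abel
    rw [this]
    exact Γ.add_mem (hγf j hj) (Γ.neg_mem hjq')
  · have e1 := heq j hj
    show x j + _ = β • R (x k + γ)
    rw [map_add, smul_add]
    linear_combination (norm := abel) -e1
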